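/- Let G ⊂ K be a finite set containing 0, let A = {(y₁,…,y_k) ∈ G^k : yⱼ = 0 for at least one j} be the axis subset of the grid G^k. Let Φ : Kⁿ → ℝᴹ be an indexed k-Janossy latent map. If for two tail configurations u, v ∈ K^{n−k} we have Φ(x_b, u) = Φ(x_b, v) for every x_b ∈ A, then Φ(x_b, u) = Φ(x_b, v) for every x_b ∈ G^k. -/
import Mathlib


/-- The unit cube `[0,1]^d` in `ℝ^d`. -/
def unitCube (d : ℕ) : Set (Fin d → ℝ) := {x | ∀ i, x i ∈ Set.Icc (0 : ℝ) 1}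

/-- for an indexed k-Janossy latent map, equality of tails on the
axis subset `A` of the grid `G^k` propagates to the full grid `G^k`. -/
theorem stmt_3 (d n k M : ℕ) (hk : 1 ≤ k) (hkn : k < n)
    (φ : (Fin k → Fin n) → (Fin k → unitCube d) → Fin M → ℝ)
    (Φ : (Fin n → unitCube d) → Fin M → ℝ)
    (hΦ : ∀ x, Φ x = ∑ I : Fin k → Fin n, φ I (fun j => x (I j)))
    (G : Finset (unitCube d)) (z : unitCube d) (hz : (z : Fin d → ℝ) = 0) (hzG : z ∈ G)
    (u v : Fin n → unitCube d)
    (haxes : ∀ xb : Fin k → unitCube d, (∀ j, xb j ∈ G) → (∃ j, xb j = z) →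
      Φ (fun i => if h : (i : ℕ) < k then xb ⟨(i : ℕ), h⟩ else u i)
        = Φ (fun i => if h : (i : ℕ) < k then xb ⟨(i : ℕ), h⟩ else v i)) :
    ∀ xb : Fin k → unitCube d, (∀ j, xb j ∈ G) →
      Φ (fun i => if h : (i : ℕ) < k then xb ⟨(i : ℕ), h⟩ else u i)
        = Φ (fun i => if h : (i : ℕ) < k then xb ⟨(i : ℕ), h⟩ else v i) := by
  classical
  intro xb hxb
  -- extension of a base block by a tail
  set E : (Fin k → unitCube d) → (Fin n → unitCube d) → (Fin n → unitCube d) :=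
    fun b w i => if h : (i : ℕ) < k then b ⟨(i : ℕ), h⟩ else w i with hE
  -- the difference function
  set F : (Fin k → unitCube d) → (Fin M → ℝ) := fun b => Φ (E b u) - Φ (E b v) with hF
  set g : (Fin k → Fin n) → (Fin k → unitCube d) → (Fin M → ℝ) :=
    fun I b => φ I (fun j => E b u (I j)) - φ I (fun j => E b v (I j)) with hg
  have hFg : ∀ b, F b = ∑ I : Fin k → Fin n, g I b := by
    intro b
    simp only [hF, hg, hΦ, Finset.sum_sub_distrib]
  -- masking a subset of base coordinates to z
  set mask : Finset (Fin k) → (Fin k → unitCube d) :=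
    fun S j => if j ∈ S then z else xb j with hmask
  -- per-index alternating sum vanishes
  have key : ∀ I : Fin k → Fin n,
      ∑ S : Finset (Fin k), ((-1 : ℤ) ^ S.card) • g I (mask S) = 0 := by
    intro I
    by_cases hall : ∀ j : Fin k, (I j : ℕ) < k
    · -- all indices in the base block: the two arguments coincide
      apply Finset.sum_eq_zero
      intro S _
      have : g I (mask S) = 0 := by
        have harg : (fun j => E (mask S) u (I j)) = (fun j => E (mask S) v (I j)) := by
          funext j
          simp only [hE, dif_pos (hall j)]
        simp only [hg, harg, sub_self]
      rw [this, smul_zero]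
    · -- some index lands in the tail: find a missed base coordinate
      push_neg at hall
      obtain ⟨j₀, hj₀⟩ := hall
      -- the base indices hit by I
      have hcard : ((Finset.image (fun j => (I j : ℕ)) Finset.univ) ∩ Finset.range k).card
          < (Finset.range k).card := by
        have hsub : (Finset.image (fun j => (I j : ℕ)) Finset.univ) ∩ Finset.range k
            ⊆ (Finset.image (fun j => (I j : ℕ)) Finset.univ).erase (I j₀ : ℕ) := by
          intro a ha
          rw [Finset.mem_inter] at ha
          refine Finset.mem_erase.2 ⟨?_, ha.1⟩
          intro h
          have := Finset.mem_range.1 ha.2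
          omega
        calc ((Finset.image (fun j => (I j : ℕ)) Finset.univ) ∩ Finset.range k).card
            ≤ ((Finset.image (fun j => (I j : ℕ)) Finset.univ).erase (I j₀ : ℕ)).card :=
              Finset.card_le_card hsub
          _ ≤ (Finset.image (fun j => (I j : ℕ)) Finset.univ).card - 1 := by
              rw [Finset.card_erase_of_mem (Finset.mem_image.2 ⟨j₀, Finset.mem_univ _, rfl⟩)]
          _ ≤ k - 1 := by
              have := Finset.card_image_le (s := (Finset.univ : Finset (Fin k)))
                (f := fun j => (I j : ℕ))
              simp only [Finset.card_univ, Fintype.card_fin] at this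
              omega
          _ < (Finset.range k).card := by
              rw [Finset.card_range]; omega
      have hns : ¬ Finset.range k ⊆
          (Finset.image (fun j => (I j : ℕ)) Finset.univ ∩ Finset.range k) :=
        fun hsub => (Finset.card_le_card hsub).not_gt hcard
      obtain ⟨mnat, hm1, hm2⟩ := Finset.not_subset.1 hns
      have hmk : mnat < k := Finset.mem_range.1 hm1
      set m : Fin k := ⟨mnat, hmk⟩ with hm
      have hmiss : ∀ j : Fin k, (I j : ℕ) ≠ mnat := by
        intro j h
        exact hm2 (Finset.mem_inter.2 ⟨Finset.mem_image.2 ⟨j, Finset.mem_univ _, h⟩, hm1⟩)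
      -- g I is independent of coordinate m
      have hindep : ∀ b b' : Fin k → unitCube d, (∀ j, j ≠ m → b j = b' j) →
          g I b = g I b' := by
        intro b b' hbb
        have h1 : (fun j => E b u (I j)) = (fun j => E b' u (I j)) := by
          funext j
          simp only [hE]
          by_cases h : (I j : ℕ) < k
          · simp only [dif_pos h]
            apply hbb
            intro hc
            exact hmiss j (congrArg (Fin.val) hc)
          · simp only [dif_neg h]
        have h2 : (fun j => E b v (I j)) = (fun j => E b' v (I j)) := by
          funext j
          simp only [hE]
          by_cases h : (I j : ℕ) < k
          · simp only [dif_pos h]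
            apply hbb
            intro hc
            exact hmiss j (congrArg (Fin.val) hc)
          · simp only [dif_neg h]
        simp only [hg, h1, h2]
      -- pair subsets via symmetric difference with {m}
      apply Finset.sum_ninvolution (fun S => if m ∈ S then S.erase m else insert m S)
      · intro S
        by_cases hmS : m ∈ S
        · simp only [if_pos hmS]
          have hgv : g I (mask S) = g I (mask (S.erase m)) := by
            apply hindep
            intro j hj
            simp only [hmask]
            simp [Finset.mem_erase, hj]
          have hc : S.card = (S.erase m).card + 1 := (Finset.card_erase_add_one hmS).symm
          rw [hgv, hc, pow_succ]
          simp [add_comm]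
        · simp only [if_neg hmS]
          have hgv : g I (mask S) = g I (mask (insert m S)) := by
            apply hindep
            intro j hj
            simp only [hmask, Finset.mem_insert]
            simp [hj]
          have hc : (insert m S).card = S.card + 1 := Finset.card_insert_of_notMem hmS
          rw [hgv, hc, pow_succ]
          simp [add_comm]
      · intro S _
        by_cases hmS : m ∈ S
        · simp only [if_pos hmS]
          intro h
          have h1 : 0 < S.card := Finset.card_pos.2 ⟨m, hmS⟩
          have h2 := Finset.card_erase_of_mem hmS
          rw [h] at h2
          omega
        · simp only [if_neg hmS]
          intro h
          have h2 := Finset.card_insert_of_notMem hmS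
          rw [h] at h2
          omega
      · intro S
        exact Finset.mem_univ _
      · intro S
        by_cases hmS : m ∈ S
        · rw [if_pos hmS, if_neg (Finset.notMem_erase m S), Finset.insert_erase hmS]
        · rw [if_neg hmS, if_pos (Finset.mem_insert_self m S), Finset.erase_insert hmS]
  -- the full alternating sum vanishes
  have hsum : ∑ S : Finset (Fin k), ((-1 : ℤ) ^ S.card) • F (mask S) = 0 := by
    calc ∑ S : Finset (Fin k), ((-1 : ℤ) ^ S.card) • F (mask S)
        = ∑ S : Finset (Fin k), ∑ I : Fin k → Fin n,
            ((-1 : ℤ) ^ S.card) • g I (mask S) := by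
          apply Finset.sum_congr rfl
          intro S _
          rw [hFg, Finset.smul_sum]
      _ = ∑ I : Fin k → Fin n, ∑ S : Finset (Fin k),
            ((-1 : ℤ) ^ S.card) • g I (mask S) := Finset.sum_comm
      _ = 0 := Finset.sum_eq_zero fun I _ => key I
  -- nonempty masks are axis points
  have hzero : ∀ S : Finset (Fin k), S ≠ ∅ → F (mask S) = 0 := by
    intro S hS
    have hmem : ∀ j, mask S j ∈ G := by
      intro j
      simp only [hmask]
      by_cases h : j ∈ S
      · simp [h, hzG]
      · simp [h, hxb j]
    obtain ⟨j, hj⟩ := Finset.nonempty_iff_ne_empty.2 hS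
    have hax : ∃ j, mask S j = z := ⟨j, by simp [hmask, hj]⟩
    have := haxes (mask S) hmem hax
    simp only [hF, hE]
    rw [sub_eq_zero]
    exact this
  -- extract the empty-set term
  have hemp : mask ∅ = xb := by
    funext j
    simp [hmask]
  have hFxb : F xb = 0 := by
    have h1 : ∑ S : Finset (Fin k), ((-1 : ℤ) ^ S.card) • F (mask S)
        = ((-1 : ℤ) ^ (∅ : Finset (Fin k)).card) • F (mask ∅) := by
      apply Finset.sum_eq_single (∅ : Finset (Fin k))
      · intro S _ hS
        rw [hzero S hS, smul_zero]
      · intro h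
        exact absurd (Finset.mem_univ _) h
    rw [h1, hemp] at hsum
    simpa using hsum
  have := sub_eq_zero.1 hFxb
  simpa only [hF, hE] using this
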